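/- Let n ≥ 2, let x_1 < ⋯ < x_n be real and m_1, …, m_n > 0, set l_k = x_{k+1} − x_k, and for 0 ≤ k ≤ n−1 let a^{(2k+1)}(z) = G_n(z) L_{n−1} G_{n−1}(z) ⋯ G_{n−k+1}(z) L_{n−k} G_{n−k}(z), where L_j = [[1, l_j, l_j²/2],[0,1,l_j],[0,0,1]] and G_j(z) = [[1,0,0],[0,1,0],[−2 m_j z,0,1]]. For k = 0: a^{(1)}_{31}(z) = −2 m_n z, a^{(1)}_{32}(z) = 0, a^{(1)}_{33}(z) = 1. For 1 ≤ k ≤ n−1: (i) a^{(2k+1)}_{31} has zero constant term, coefficient of z equal to −2 Σ_{i=n−k}^{n} m_i, and leading term (−2z)^{k+1} (∏_{i=n+1−k}^{n} m_i l_{i−1}²/2) m_{n−k} of degree k+1; (ii) a^{(2k+1)}_{32} has zero constant term, coefficient of z equal to −2 Σ_{i=n+1−k}^{n} m_i (x_i − x_{n−k}), and leading term (−2z)^{k} (∏_{i=n+2−k}^{n} m_i l_{i−1}²/2) m_{n+1−k} l_{n−k} of degree k; (iii) a^{(2k+1)}_{33} has constant term 1, coefficient of z equal to −Σ_{i=n+1−k}^{n}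 m_i (x_i − x_{n−k})², and leading term (−2z)^{k} ∏_{i=n+1−k}^{n} m_i l_{i−1}²/2 of degree k. -/

import Mathlib

open Polynomial Matrix

/-- The transfer matrix `L_k` of the discrete cubic string (with gap `l`). -/
noncomputable def Lmat (l : ℝ) : Matrix (Fin 3) (Fin 3) (Polynomial ℝ) :=
  !![1, Polynomial.C l, Polynomial.C (l ^ 2 / 2);
     0, 1, Polynomial.C l;
     0, 0, 1]

/-- The transfer matrix `G_k(z)` of the discrete cubic string (with mass `m`). -/
noncomputable def Gmat (m : ℝ) : Matrix (Fin 3) (Fin 3) (Polynomial ℝ) :=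
  !![1, 0, 0;
     0, 1, 0;
     Polynomial.C (-2 * m) * Polynomial.X, 0, 1]

/-- The transition matrix `S(z) = G_n(z) L_{n−1} G_{n−1}(z) ⋯ L_1 G_1(z)` of the
discrete cubic string with masses `m 1, …, m n` and gaps `l 1, …, l (n−1)`. -/
noncomputable def transMat (m l : ℕ → ℝ) : ℕ → Matrix (Fin 3) (Fin 3) (Polynomial ℝ)
  | 0 => 1
  | 1 => Gmat (m 1)
  | (k + 2) => Gmat (m (k + 2)) * Lmat (l (k + 1)) * transMat m l (k + 1)

/-- `aMat m l n k` is `a^{(2k+1)}(z) = G_n(z) L_{n−1} G_{n−1}(z) ⋯ L_{n−k} G_{n−k}(z)`,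
the product of the leftmost `2k+1` factors of the transition matrix. -/
noncomputable def aMat (m l : ℕ → ℝ) (n : ℕ) : ℕ → Matrix (Fin 3) (Fin 3) (Polynomial ℝ)
  | 0 => Gmat (m n)
  | (k + 1) => aMat m l n k * Lmat (l (n - (k + 1))) * Gmat (m (n - (k + 1)))

/- ### Auxiliary lemmas -/

lemma Iccins {p n : ℕ} (h : p ≤ n) : Finset.Icc p n = insert p (Finset.Icc (p+1) n) := by
  ext i; simp [Finset.mem_Icc]; omega

lemma pnotmem (p n : ℕ) : p ∉ Finset.Icc (p+1) n := by simp

lemma nd_eq {P : Polynomial ℝ} {d : ℕ} (h1 : P.natDegree ≤ d) (h2 : P.coeff d ≠ 0) :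
    P.natDegree = d := le_antisymm h1 (le_natDegree_of_ne_zero h2)

lemma ndmulC {D : Polynomial ℝ} {d : ℕ} (c : ℝ) (h : D.natDegree ≤ d) :
    (D * C c).natDegree ≤ d := by
  refine (natDegree_mul_le).trans ?_
  simp [natDegree_C, h]

lemma ndmulCX {D : Polynomial ℝ} {d : ℕ} (c : ℝ) (h : D.natDegree ≤ d) :
    (D * C c * X).natDegree ≤ d + 1 := by
  refine (natDegree_mul_le).trans ?_
  have := ndmulC c h
  simp only [natDegree_X]
  omega

lemma coeff_mCX (D : Polynomial ℝ) (c : ℝ) (j : ℕ) :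
    (D * C c * X).coeff (j+1) = D.coeff j * c := by rw [coeff_mul_X, coeff_mul_C]

lemma coeff_mCX0 (D : Polynomial ℝ) (c : ℝ) : (D * C c * X).coeff 0 = 0 := by
  simp [mul_coeff_zero]

lemma coeff_mCX1 (D : Polynomial ℝ) (c : ℝ) :
    (D * C c * X).coeff 1 = D.coeff 0 * c := by simpa using coeff_mCX D c 0

lemma q0 (a b : ℝ) : (C a * X + C b * X^2).coeff 0 = 0 := by simp
lemma q1 (a b : ℝ) : (C a * X + C b * X^2).coeff 1 = a := by simp
lemma q2 (a b : ℝ) : (C a * X + C b * X^2).coeff 2 = b := by simp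
lemma qd (a b : ℝ) (hb : b ≠ 0) : (C a * X + C b * X^2).natDegree = 2 := by
  refine le_antisymm ?_ (le_natDegree_of_ne_zero (by simpa using hb))
  compute_degree
lemma s0 (a : ℝ) : (C a * X).coeff 0 = 0 := by simp
lemma s1 (a : ℝ) : (C a * X).coeff 1 = a := by simp
lemma sd (a : ℝ) (ha : a ≠ 0) : (C a * X).natDegree = 1 := by
  refine le_antisymm ?_ (le_natDegree_of_ne_zero (by simpa using ha))
  compute_degree
lemma o0 (a : ℝ) : (1 + C a * X).coeff 0 = 1 := by simp
lemma o1 (a : ℝ) : (1 + C a * X).coeff 1 = a := by simp [coeff_one]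
lemma od (a : ℝ) (ha : a ≠ 0) : (1 + C a * X).natDegree = 1 := by
  refine le_antisymm ?_ (le_natDegree_of_ne_zero (by simpa [coeff_one] using ha))
  compute_degree

lemma sumlem2 (n p : ℕ) (x m : ℕ → ℝ) (h : p + 1 ≤ n) :
    (-2 * ∑ i ∈ Finset.Icc (p+1) n, m i) * (x (p+1) - x p)
      + -2 * ∑ i ∈ Finset.Icc (p+2) n, m i * (x i - x (p+1))
      = -2 * ∑ i ∈ Finset.Icc (p+1) n, m i * (x i - x p) := by
  rw [Iccins h, Finset.sum_insert (pnotmem _ _), Finset.sum_insert (pnotmem _ _)]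
  have e1 : ∑ i ∈ Finset.Icc (p+2) n, m i * (x i - x p)
      = ∑ i ∈ Finset.Icc (p+2) n, (m i * (x i - x (p+1)) + (x (p+1) - x p) * m i) :=
    Finset.sum_congr rfl (fun i _ => by ring)
  rw [e1, Finset.sum_add_distrib, ← Finset.mul_sum]
  ring

lemma sumlem3 (n p : ℕ) (x m : ℕ → ℝ) (h : p + 1 ≤ n) :
    (-2 * ∑ i ∈ Finset.Icc (p+1) n, m i) * ((x (p+1) - x p)^2/2)
      + (-2 * ∑ i ∈ Finset.Icc (p+2) n, m i * (x i - x (p+1))) * (x (p+1) - x p)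
      + -(∑ i ∈ Finset.Icc (p+2) n, m i * (x i - x (p+1))^2)
      = -∑ i ∈ Finset.Icc (p+1) n, m i * (x i - x p)^2 := by
  rw [Iccins h, Finset.sum_insert (pnotmem _ _), Finset.sum_insert (pnotmem _ _)]
  have e1 : ∑ i ∈ Finset.Icc (p+2) n, m i * (x i - x p)^2
      = ∑ i ∈ Finset.Icc (p+2) n, ((m i * (x i - x (p+1))^2
          + 2*(x (p+1) - x p) * (m i * (x i - x (p+1)))) + (x (p+1) - x p)^2 * m i) :=
    Finset.sum_congr rfl (fun i _ => by ring)
  rw [e1, Finset.sum_add_distrib, Finset.sum_add_distrib, ← Finset.mul_sum, ← Finset.mul_sum]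
  ring

lemma prodsplit (n p : ℕ) (m l : ℕ → ℝ) (h : p + 1 ≤ n) :
    ∏ i ∈ Finset.Icc (p+1) n, m i * l (i-1)^2/2
      = (m (p+1) * l p ^2/2) * ∏ i ∈ Finset.Icc (p+2) n, m i * l (i-1)^2/2 := by
  rw [Iccins h, Finset.prod_insert (pnotmem _ _)]
  norm_num

lemma entry0 (M : Matrix (Fin 3) (Fin 3) (Polynomial ℝ)) (l μ : ℝ) :
    (M * Lmat l * Gmat μ) 2 0
      = M 2 0 + (M 2 0 * C (l^2/2) + M 2 1 * C l + M 2 2) * C (-2*μ) * X := by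
  simp [Lmat, Gmat, Matrix.mul_apply, Fin.sum_univ_three]; ring

lemma entry1 (M : Matrix (Fin 3) (Fin 3) (Polynomial ℝ)) (l μ : ℝ) :
    (M * Lmat l * Gmat μ) 2 1 = M 2 0 * C l + M 2 1 := by
  simp [Lmat, Gmat, Matrix.mul_apply, Fin.sum_univ_three]

lemma entry2 (M : Matrix (Fin 3) (Fin 3) (Polynomial ℝ)) (l μ : ℝ) :
    (M * Lmat l * Gmat μ) 2 2 = M 2 0 * C (l^2/2) + M 2 1 * C l + M 2 2 := by
  simp [Lmat, Gmat, Matrix.mul_apply, Fin.sum_univ_three]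

lemma base20 (m l : ℕ → ℝ) (n : ℕ) : aMat m l n 0 2 0 = C (-2 * m n) * X := by
  simp [aMat, Gmat]
lemma base21 (m l : ℕ → ℝ) (n : ℕ) : aMat m l n 0 2 1 = 0 := by simp [aMat, Gmat]
lemma base22 (m l : ℕ → ℝ) (n : ℕ) : aMat m l n 0 2 2 = 1 := by simp [aMat, Gmat]

lemma aux (n : ℕ) (x m l : ℕ → ℝ)
    (hx : ∀ i, 1 ≤ i → i < n → x i < x (i + 1))
    (hm : ∀ i, 1 ≤ i → i ≤ n → 0 < m i)
    (hl : ∀ k, l k = x (k + 1) - x k) :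
    ∀ k p : ℕ, 1 ≤ k → 1 ≤ p → p + k = n →
      ((aMat m l n k 2 0).coeff 0 = 0 ∧
       (aMat m l n k 2 0).coeff 1 = -2 * ∑ i ∈ Finset.Icc p n, m i ∧
       (aMat m l n k 2 0).natDegree = k + 1 ∧
       (aMat m l n k 2 0).coeff (k + 1)
         = (-2) ^ (k + 1) * (∏ i ∈ Finset.Icc (p+1) n, m i * l (i - 1) ^ 2 / 2) * m p) ∧
      ((aMat m l n k 2 1).coeff 0 = 0 ∧
       (aMat m l n k 2 1).coeff 1 = -2 * ∑ i ∈ Finset.Icc (p+1) n, m i * (x i - x p) ∧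
       (aMat m l n k 2 1).natDegree = k ∧
       (aMat m l n k 2 1).coeff k
         = (-2) ^ k * (∏ i ∈ Finset.Icc (p+2) n, m i * l (i - 1) ^ 2 / 2)
             * (m (p+1) * l p)) ∧
      ((aMat m l n k 2 2).coeff 0 = 1 ∧
       (aMat m l n k 2 2).coeff 1 = -∑ i ∈ Finset.Icc (p+1) n, m i * (x i - x p) ^ 2 ∧
       (aMat m l n k 2 2).natDegree = k ∧
       (aMat m l n k 2 2).coeff k
         = (-2) ^ k * ∏ i ∈ Finset.Icc (p+1) n, m i * l (i - 1) ^ 2 / 2) := by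
  have hlpos : ∀ j, 1 ≤ j → j < n → 0 < l j := fun j h1 h2 => by
    rw [hl]; linarith [hx j h1 h2]
  have hprod : ∀ q, 2 ≤ q → 0 < ∏ i ∈ Finset.Icc q n, m i * l (i - 1) ^ 2 / 2 := by
    intro q hq
    apply Finset.prod_pos
    intro i hi
    simp only [Finset.mem_Icc] at hi
    have h1 : (1:ℕ) ≤ i - 1 := by omega
    have h2 : i - 1 < n := by omega
    have hli := hlpos (i-1) h1 h2
    have hmi := hm i (by omega) hi.2
    positivity
  intro k
  induction k with
  | zero => intro p h1 _ _; exact absurd h1 (by omega)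
  | succ k ih =>
    intro p hk hp hpn
    have hnk : n - (k+1) = p := by omega
    have hstep : aMat m l n (k+1) = aMat m l n k * Lmat (l p) * Gmat (m p) := by
      show aMat m l n k * Lmat (l (n - (k+1))) * Gmat (m (n - (k+1))) = _
      rw [hnk]
    have hE0 : aMat m l n (k+1) 2 0
        = aMat m l n k 2 0 + (aMat m l n k 2 0 * C (l p^2/2) + aMat m l n k 2 1 * C (l p)
            + aMat m l n k 2 2) * C (-2*(m p)) * X := by
      rw [hstep]; exact entry0 _ _ _
    have hE1 : aMat m l n (k+1) 2 1 = aMat m l n k 2 0 * C (l p) + aMat m l n k 2 1 := by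
      rw [hstep]; exact entry1 _ _ _
    have hE2 : aMat m l n (k+1) 2 2
        = aMat m l n k 2 0 * C (l p^2/2) + aMat m l n k 2 1 * C (l p) + aMat m l n k 2 2 := by
      rw [hstep]; exact entry2 _ _ _
    rcases Nat.eq_zero_or_pos k with hk0 | hk1
    · -- base case k = 1 (i.e. k = 0 here)
      subst hk0
      have hpn1 : p + 1 = n := by omega
      have hmn := hm n (by omega) le_rfl
      have hmp := hm p hp (by omega)
      have hlp := hlpos p hp (by omega)
      simp only [Nat.zero_add] at hE0 hE1 hE2
      simp only [Nat.zero_add, show (1:ℕ)+1 = 2 from rfl]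
      rw [base20, base21, base22] at hE0
      rw [base20, base21] at hE1
      rw [base20, base21, base22] at hE2
      have hA : aMat m l n 1 2 0 = C (-2 * m n + -2 * m p) * X
          + C ((-2 * m n) * (l p^2/2) * (-2 * m p)) * X^2 := by
        rw [hE0]; simp only [C_add, C_mul]; ring
      have hB : aMat m l n 1 2 1 = C (-2 * m n * l p) * X := by
        rw [hE1]; simp only [C_mul]; ring
      have hC : aMat m l n 1 2 2 = 1 + C (-2 * m n * (l p^2/2)) * X := by
        rw [hE2]; simp only [C_mul]; ring
      have hIcc1 : Finset.Icc (p+1) n = {n} := by rw [hpn1, Finset.Icc_self]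
      have hIcc2 : Finset.Icc (p+2) n = ∅ := Finset.Icc_eq_empty (by omega)
      have hn1p : n - 1 = p := by omega
      have hbA : (-2 * m n) * (l p^2/2) * (-2 * m p) ≠ 0 := by positivity
      have hbB : -2 * m n * l p ≠ 0 := by
        have h : (0:ℝ) < 2 * m n * l p := by positivity
        intro h'; nlinarith
      have hbC : -2 * m n * (l p^2/2) ≠ 0 := by
        have h : (0:ℝ) < 2 * m n * (l p^2/2) := by positivity
        intro h'; nlinarith
      refine ⟨⟨?_, ?_, ?_, ?_⟩, ⟨?_, ?_, ?_, ?_⟩, ⟨?_, ?_, ?_, ?_⟩⟩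
      · rw [hA]; exact q0 _ _
      · rw [hA, q1, Iccins (show p ≤ n by omega), Finset.sum_insert (pnotmem _ _), hIcc1,
          Finset.sum_singleton]
        ring
      · rw [hA]; exact qd _ _ hbA
      · rw [hA, q2, hIcc1, Finset.prod_singleton, hn1p]; ring
      · rw [hB]; exact s0 _
      · rw [hB, s1, hIcc1, Finset.sum_singleton, hl p, hpn1]; ring
      · rw [hB]; exact sd _ hbB
      · rw [hB, s1, hIcc2, Finset.prod_empty, hpn1]; ring
      · rw [hC]; exact o0 _
      · rw [hC, o1, hIcc1, Finset.sum_singleton, hl p, hpn1]; ring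
      · rw [hC]; exact od _ hbC
      · rw [hC, o1, hIcc1, Finset.prod_singleton, hn1p]; ring
    · -- inductive step: k ≥ 1
      obtain ⟨⟨hA0, hA1, hAd, hAt⟩, ⟨hB0, hB1, hBd, hBt⟩, ⟨hC0, hC1, hCd, hCt⟩⟩ :=
        ih (p+1) hk1 (by omega) (by omega)
      have hppos := hm p hp (by omega)
      have hp1pos := hm (p+1) (by omega) (by omega)
      have hlp := hlpos p hp (by omega)
      have hprod1 := hprod (p+1) (by omega)
      have hprod2 := hprod (p+2) (by omega)
      -- facts about D := the (2,2) entry of the new matrix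
      have hBk1 : (aMat m l n k 2 1).coeff (k+1) = 0 :=
        coeff_eq_zero_of_natDegree_lt (by omega)
      have hCk1 : (aMat m l n k 2 2).coeff (k+1) = 0 :=
        coeff_eq_zero_of_natDegree_lt (by omega)
      have hAk2 : (aMat m l n k 2 0).coeff (k+1+1) = 0 :=
        coeff_eq_zero_of_natDegree_lt (by omega)
      have hD0 : (aMat m l n (k+1) 2 2).coeff 0 = 1 := by
        rw [hE2]; simp [coeff_mul_C, hA0, hB0, hC0]
      have hD1 : (aMat m l n (k+1) 2 2).coeff 1
          = -∑ i ∈ Finset.Icc (p+1) n, m i * (x i - x p) ^ 2 := by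
        rw [hE2]
        simp only [coeff_add, coeff_mul_C, hA1, hB1, hC1]
        rw [hl p]
        linear_combination sumlem3 n p x m (by omega)
      have hDt : (aMat m l n (k+1) 2 2).coeff (k+1)
          = (-2) ^ (k+1) * ∏ i ∈ Finset.Icc (p+1) n, m i * l (i - 1) ^ 2 / 2 := by
        rw [hE2]
        simp only [coeff_add, coeff_mul_C, hAt, hBk1, hCk1]
        rw [prodsplit n p m l (by omega)]
        ring
      have hDdle : (aMat m l n (k+1) 2 2).natDegree ≤ k + 1 := by
        rw [hE2]
        refine (natDegree_add_le _ _).trans (max_le ((natDegree_add_le _ _).trans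
          (max_le (ndmulC _ (le_of_eq hAd)) ((ndmulC _ (le_of_eq hBd)).trans (by omega))))
          (by omega))
      have hDne : (aMat m l n (k+1) 2 2).coeff (k+1) ≠ 0 := by
        rw [hDt]
        exact mul_ne_zero (pow_ne_zero _ (by norm_num)) (ne_of_gt hprod1)
      have hDd : (aMat m l n (k+1) 2 2).natDegree = k + 1 := nd_eq hDdle hDne
      have hE0' : aMat m l n (k+1) 2 0
          = aMat m l n k 2 0 + aMat m l n (k+1) 2 2 * C (-2*(m p)) * X := by
        rw [hE0, hE2]
      have hAtop : (aMat m l n (k+1) 2 0).coeff (k+1+1)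
          = (-2) ^ (k+1+1) * (∏ i ∈ Finset.Icc (p+1) n, m i * l (i - 1) ^ 2 / 2) * m p := by
        rw [hE0', coeff_add, coeff_mCX _ _ (k+1), hAk2, hDt]
        ring
      have hAne : (aMat m l n (k+1) 2 0).coeff (k+1+1) ≠ 0 := by
        rw [hAtop]
        exact mul_ne_zero (mul_ne_zero (pow_ne_zero _ (by norm_num)) (ne_of_gt hprod1))
          (ne_of_gt hppos)
      refine ⟨⟨?_, ?_, ?_, ?_⟩, ⟨?_, ?_, ?_, ?_⟩, ⟨?_, ?_, ?_, ?_⟩⟩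
      · rw [hE0]
        simp [mul_coeff_zero, hA0]
      · rw [hE0, coeff_add, coeff_mCX1]
        simp only [coeff_add, coeff_mul_C, hA0, hB0, hC0, hA1]
        rw [Iccins (show p ≤ n by omega), Finset.sum_insert (pnotmem _ _)]
        ring
      · refine nd_eq ?_ hAne
        rw [hE0']
        refine (natDegree_add_le _ _).trans (max_le (le_trans (le_of_eq hAd) (by omega))
          ((ndmulCX _ (le_of_eq hDd)).trans (by omega)))
      · exact hAtop
      · rw [hE1]; simp [coeff_mul_C, hA0, hB0]
      · rw [hE1]
        simp only [coeff_add, coeff_mul_C, hA1, hB1]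
        rw [hl p]
        linear_combination sumlem2 n p x m (by omega)
      · rw [hE1]
        have hne : (aMat m l n k 2 0 * C (l p) + aMat m l n k 2 1).coeff (k+1) ≠ 0 := by
          simp only [coeff_add, coeff_mul_C, hAt, hBk1]
          have : (-2:ℝ) ^ (k + 1) * (∏ i ∈ Finset.Icc (p+2) n, m i * l (i - 1) ^ 2 / 2)
              * m (p+1) * l p + 0 ≠ 0 := by
            have h2 : ((-2:ℝ)) ^ (k+1) ≠ 0 := pow_ne_zero _ (by norm_num)
            have := mul_ne_zero (mul_ne_zero (mul_ne_zero h2 (ne_of_gt hprod2))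
              (ne_of_gt hp1pos)) (ne_of_gt hlp)
            simpa using this
          exact this
        refine nd_eq ?_ hne
        exact (natDegree_add_le _ _).trans (max_le (ndmulC _ (le_of_eq hAd)) (by omega))
      · rw [hE1]
        simp only [coeff_add, coeff_mul_C, hAt, hBk1]
        ring
      · exact hD0
      · exact hD1
      · exact hDd
      · exact hDt

/-- **Explicit lowest and highest coefficients of the third row of `a^{(2k+1)}(z)`.**
For `k = 0`: `a^{(1)}_{31} = −2 m_n z`, `a^{(1)}_{32} = 0`, `a^{(1)}_{33} = 1`.
For `1 ≤ k ≤ n−1`, with `l_j = x_{j+1} − x_j`: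
`a^{(2k+1)}_{31}` has zero constant term, `z`-coefficient `−2 Σ_{i=n−k}^n m_i` and
leading term `(−2z)^{k+1}(∏_{i=n+1−k}^n m_i l_{i−1}²/2) m_{n−k}` of degree `k+1`;
`a^{(2k+1)}_{32}` has zero constant term, `z`-coefficient
`−2 Σ_{i=n+1−k}^n m_i (x_i − x_{n−k})` and leading term
`(−2z)^k (∏_{i=n+2−k}^n m_i l_{i−1}²/2) m_{n+1−k} l_{n−k}` of degree `k`;
`a^{(2k+1)}_{33}` has constant term `1`, `z`-coefficient
`−Σ_{i=n+1−k}^n m_i (x_i − x_{n−k})²` and leading term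
`(−2z)^k ∏_{i=n+1−k}^n m_i l_{i−1}²/2` of degree `k`.
(Matrix indices are 0-based.) -/
theorem stmt10 (n : ℕ) (hn : 2 ≤ n) (x m : ℕ → ℝ)
    (hx : ∀ i, 1 ≤ i → i < n → x i < x (i + 1))
    (hm : ∀ i, 1 ≤ i → i ≤ n → 0 < m i)
    (l : ℕ → ℝ) (hl : ∀ k, l k = x (k + 1) - x k) :
    (aMat m l n 0 2 0 = Polynomial.C (-2 * m n) * Polynomial.X ∧
     aMat m l n 0 2 1 = 0 ∧
     aMat m l n 0 2 2 = 1) ∧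
    (∀ k, 1 ≤ k → k ≤ n - 1 →
      ((aMat m l n k 2 0).coeff 0 = 0 ∧
       (aMat m l n k 2 0).coeff 1 = -2 * ∑ i ∈ Finset.Icc (n - k) n, m i ∧
       (aMat m l n k 2 0).natDegree = k + 1 ∧
       (aMat m l n k 2 0).coeff (k + 1)
         = (-2) ^ (k + 1) * (∏ i ∈ Finset.Icc (n + 1 - k) n, m i * l (i - 1) ^ 2 / 2)
             * m (n - k)) ∧
      ((aMat m l n k 2 1).coeff 0 = 0 ∧
       (aMat m l n k 2 1).coeff 1
         = -2 * ∑ i ∈ Finset.Icc (n + 1 - k) n, m i * (x i - x (n - k)) ∧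
       (aMat m l n k 2 1).natDegree = k ∧
       (aMat m l n k 2 1).coeff k
         = (-2) ^ k * (∏ i ∈ Finset.Icc (n + 2 - k) n, m i * l (i - 1) ^ 2 / 2)
             * (m (n + 1 - k) * l (n - k))) ∧
      ((aMat m l n k 2 2).coeff 0 = 1 ∧
       (aMat m l n k 2 2).coeff 1
         = -∑ i ∈ Finset.Icc (n + 1 - k) n, m i * (x i - x (n - k)) ^ 2 ∧
       (aMat m l n k 2 2).natDegree = k ∧
       (aMat m l n k 2 2).coeff k
         = (-2) ^ k * ∏ i ∈ Finset.Icc (n + 1 - k) n, m i * l (i - 1) ^ 2 / 2)) := by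
  refine ⟨⟨base20 m l n, base21 m l n, base22 m l n⟩, ?_⟩
  intro k hk1 hk2
  have e2 : n + 1 - k = (n - k) + 1 := by omega
  have e3 : n + 2 - k = (n - k) + 2 := by omega
  rw [e2, e3]
  exact aux n x m l hx hm hl k (n - k) hk1 (by omega) (by omega)
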